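/- For k ≥ 3 and n ≥ 1, the minimal number of cylinder intersections contained in Part_{n,k}⁻¹(1) needed to partition Part_{n,k}⁻¹(1) equals the minimal number of colors required to color [k]^n so that no combinatorial line is monochromatic. -/

import Mathlib

def IsPartitionTuple (n k : ℕ) (S : Fin k → Finset (Fin n)) : Prop :=
  (∀ i j, i ≠ j → Disjoint (S i) (S j)) ∧ ∀ x : Fin n, ∃ i, x ∈ S i

def IsCylinder {k : ℕ} {X : Fin k → Type*} (i : Fin k) (C : Set (∀ j, X j)) : Prop :=
  ∀ x y : ∀ j, X j, (∀ j, j ≠ i → x j = y j) → (x ∈ C ↔ y ∈ C)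

def IsCylinderIntersection {k : ℕ} {X : Fin k → Type*} (C : Set (∀ j, X j)) : Prop :=
  ∃ Cs : Fin k → Set (∀ j, X j), (∀ i, IsCylinder i (Cs i)) ∧ C = ⋂ i, Cs i

def IsCombinatorialLine (n k : ℕ) (L : Set (Fin n → Fin k)) : Prop :=
  ∃ w : Fin n → Option (Fin k), (∃ x, w x = none) ∧
    L = Set.range fun j : Fin k => fun x : Fin n => (w x).getD j

open Finset

/-- The partition tuple associated to a word. -/
def ptup {n k : ℕ} (w : Fin n → Fin k) : Fin k → Finset (Fin n) :=
  fun i => univ.filter fun x => w x = i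

lemma ptup_isPartitionTuple {n k : ℕ} (w : Fin n → Fin k) :
    IsPartitionTuple n k (ptup w) := by
  constructor
  · intro i j hij
    rw [Finset.disjoint_left]
    intro x hx hx'
    simp only [ptup, mem_filter] at hx hx'
    exact hij (hx.2 ▸ hx'.2)
  · intro x
    exact ⟨w x, by simp [ptup]⟩

/-- The word that player `i` reconstructs from the parts other than `S i`. -/
noncomputable def wrd {n k : ℕ} (i : Fin k) (S : Fin k → Finset (Fin n)) :
    Fin n → Fin k :=
  fun x => WithTop.untopD i (((univ.erase i).filter fun l => x ∈ S l).min)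

lemma wrd_apply_of_mem {n k : ℕ} {i l : Fin k} {S : Fin k → Finset (Fin n)} {x : Fin n}
    (hl : l ≠ i) (hx : x ∈ S l) (huniq : ∀ l', l' ≠ i → x ∈ S l' → l' = l) :
    wrd i S x = l := by
  have h : ((univ.erase i).filter fun l' => x ∈ S l') = {l} := by
    ext l'
    simp only [mem_filter, mem_erase, mem_univ, and_true, mem_singleton]
    constructor
    · rintro ⟨h1, h2⟩; exact huniq l' h1 h2
    · rintro rfl; exact ⟨hl, hx⟩
  simp [wrd, h]

lemma wrd_apply_of_not_mem {n k : ℕ} {i : Fin k} {S : Fin k → Finset (Fin n)} {x : Fin n}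
    (h : ∀ l, l ≠ i → x ∉ S l) : wrd i S x = i := by
  have hfe : ((univ.erase i).filter fun l => x ∈ S l) = ∅ := by
    ext l'
    simp only [mem_filter, mem_erase, mem_univ, and_true, notMem_empty, iff_false, not_and]
    exact h l'
  simp [wrd, hfe]

lemma wrd_congr {n k : ℕ} {i : Fin k} {S T : Fin k → Finset (Fin n)}
    (h : ∀ j, j ≠ i → S j = T j) : wrd i S = wrd i T := by
  funext x
  have : ((univ.erase i).filter fun l => x ∈ S l)
      = ((univ.erase i).filter fun l => x ∈ T l) := by
    apply Finset.filter_congr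
    intro l hl
    rw [h l (mem_erase.1 hl).1]
  simp [wrd, this]

/-- On partition tuples, `wrd i S` does not depend on `i`: it is the word whose
`x`-th letter is the unique `l` with `x ∈ S l`. -/
lemma wrd_eq_of_partition {n k : ℕ} {S : Fin k → Finset (Fin n)}
    (hS : IsPartitionTuple n k S) (i : Fin k) {x : Fin n} {l : Fin k} (hl : x ∈ S l) :
    wrd i S x = l := by
  have huniq : ∀ l', x ∈ S l' → l' = l := by
    intro l' hl'
    by_contra hne
    exact Finset.disjoint_left.1 (hS.1 l' l hne) hl' hl
  by_cases hli : l = i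
  · subst hli
    exact wrd_apply_of_not_mem fun l' hl' hm => hl' (huniq l' hm)
  · exact wrd_apply_of_mem hli hl fun l' _ hm => huniq l' hm

theorem chromatic_part_eq_line_coloring (n k : ℕ) (hk : 3 ≤ k) (hn : 1 ≤ n) :
    sInf {m | ∃ F : Fin m → Set (Fin k → Finset (Fin n)),
        (∀ j, IsCylinderIntersection (F j) ∧ F j ⊆ {S | IsPartitionTuple n k S}) ∧
        (∀ S, IsPartitionTuple n k S → ∃! j, S ∈ F j)} =
    sInf {m | ∃ col : (Fin n → Fin k) → Fin m,
        ∀ L, IsCombinatorialLine n k L → ¬ ∃ c, ∀ w ∈ L, col w = c} := by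
  congr 1
  ext m
  simp only [Set.mem_setOf_eq]
  constructor
  · -- from a cylinder-intersection partition, build a good coloring
    rintro ⟨F, hF1, hF2⟩
    choose colf hcolf using fun w : Fin n → Fin k =>
      (hF2 (ptup w) (ptup_isPartitionTuple w)).exists
    refine ⟨colf, ?_⟩
    rintro L ⟨w, ⟨x₀, hx₀⟩, rfl⟩ ⟨c, hc⟩
    have hu : ∀ j : Fin k, ptup (fun x => (w x).getD j) ∈ F c := by
      intro j
      have h1 := hc (fun x => (w x).getD j) ⟨j, rfl⟩
      have h2 := hcolf (fun x => (w x).getD j)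
      rwa [h1] at h2
    obtain ⟨Cs, hCs, hFc⟩ := (hF1 c).1
    set T : Fin k → Finset (Fin n) := fun i => univ.filter fun x => w x = some i with hT
    have hTF : T ∈ F c := by
      rw [hFc]
      refine Set.mem_iInter.2 fun i => ?_
      have h1 : ptup (fun x => (w x).getD i) ∈ Cs i := by
        have := hu i; rw [hFc] at this; exact Set.mem_iInter.1 this i
      refine (hCs i (ptup fun x => (w x).getD i) T ?_).1 h1
      intro j hj
      ext x
      simp only [ptup, hT, mem_filter, mem_univ, true_and]
      cases hw : w x with
      | none => simp [hw, Ne.symm hj]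
      | some a => simp [hw]
    have hpart : IsPartitionTuple n k T := (hF1 c).2 hTF
    obtain ⟨i, hi⟩ := hpart.2 x₀
    simp [hT, hx₀] at hi
  · -- from a good coloring, build a cylinder-intersection partition
    rintro ⟨col, hcol⟩
    classical
    set Cs : Fin m → Fin k → Set (Fin k → Finset (Fin n)) := fun c i =>
      {S | (∀ j l, j ≠ i → l ≠ i → j ≠ l → Disjoint (S j) (S l)) ∧ col (wrd i S) = c}
      with hCs
    have hcyl : ∀ c i, IsCylinder i (Cs c i) := by
      intro c i S T h
      have hw : wrd i S = wrd i T := wrd_congr h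
      simp only [hCs, Set.mem_setOf_eq, hw]
      constructor
      · rintro ⟨hd, hc2⟩
        exact ⟨fun j l hj hl hjl => by rw [← h j hj, ← h l hl]; exact hd j l hj hl hjl, hc2⟩
      · rintro ⟨hd, hc2⟩
        exact ⟨fun j l hj hl hjl => by rw [h j hj, h l hl]; exact hd j l hj hl hjl, hc2⟩
    -- any element of the intersection is a partition tuple
    have key : ∀ c S, S ∈ ⋂ i, Cs c i → IsPartitionTuple n k S := by
      intro c S hS
      have hmem : ∀ i, S ∈ Cs c i := fun i => Set.mem_iInter.1 hS i
      have hdisj : ∀ j l : Fin k, j ≠ l → Disjoint (S j) (S l) := by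
        intro j l hjl
        have hcard : ({j, l} : Finset (Fin k)).card < (univ : Finset (Fin k)).card := by
          have h1 : ({j, l} : Finset (Fin k)).card ≤ 2 :=
            (Finset.card_insert_le _ _).trans (by simp)
          have h2 : (univ : Finset (Fin k)).card = k := by simp
          omega
        have hss : ({j, l} : Finset (Fin k)) ⊂ univ := by
          refine Finset.ssubset_univ_iff.2 fun h => ?_
          rw [h] at hcard; exact lt_irrefl _ hcard
        obtain ⟨i, -, hi⟩ := Finset.exists_of_ssubset hss
        simp only [mem_insert, mem_singleton, not_or] at hi
        exact (hmem i).1 j l (fun h => hi.1 h.symm) (fun h => hi.2 h.symm) hjl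
      refine ⟨hdisj, ?_⟩
      by_contra hcov
      push_neg at hcov
      obtain ⟨x₀, hx₀⟩ := hcov
      set w : Fin n → Option (Fin k) := fun x =>
        if h : ∃ l, x ∈ S l then some h.choose else none with hwdef
      have hwrd : ∀ i : Fin k, wrd i S = fun x => (w x).getD i := by
        intro i
        funext x
        by_cases h : ∃ l, x ∈ S l
        · have hl : x ∈ S h.choose := h.choose_spec
          have huniq : ∀ l', x ∈ S l' → l' = h.choose := by
            intro l' hl'
            by_contra hne
            exact Finset.disjoint_left.1 (hdisj l' h.choose hne) hl' hl
          simp only [hwdef, dif_pos h, Option.getD_some]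
          by_cases hi : h.choose = i
          · rw [hi]
            exact wrd_apply_of_not_mem fun l' hl' hm => hl' ((huniq l' hm).trans hi)
          · exact wrd_apply_of_mem hi hl fun l' _ hm => huniq l' hm
        · push_neg at h
          simp only [hwdef, dif_neg (not_exists.2 h), Option.getD_none]
          exact wrd_apply_of_not_mem fun l _ => h l
      have hline : IsCombinatorialLine n k
          (Set.range fun j : Fin k => fun x : Fin n => (w x).getD j) :=
        ⟨w, ⟨x₀, by simp [hwdef, hx₀]⟩, rfl⟩
      refine hcol _ hline ⟨c, ?_⟩
      rintro u ⟨j, rfl⟩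
      have h2 := (hmem j).2
      rw [hwrd j] at h2
      exact h2
    have i0 : Fin k := ⟨0, by omega⟩
    refine ⟨fun c => ⋂ i, Cs c i, fun c => ⟨⟨Cs c, hcyl c, rfl⟩, fun S hS => key c S hS⟩, ?_⟩
    intro S hS
    have hmemCs : ∀ c i, col (wrd i S) = c → S ∈ Cs c i := by
      intro c i hc
      exact ⟨fun j l _ _ hjl => hS.1 j l hjl, hc⟩
    have hwconst : ∀ i, wrd i S = wrd i0 S := by
      intro i
      funext x
      obtain ⟨l, hl⟩ := hS.2 x
      rw [wrd_eq_of_partition hS i hl, wrd_eq_of_partition hS i0 hl]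
    refine ⟨col (wrd i0 S), ?_, ?_⟩
    · exact Set.mem_iInter.2 fun i => hmemCs _ i (by rw [hwconst i])
    · intro c hc
      have := (Set.mem_iInter.1 hc i0).2
      exact this.symm
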